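/- Let Y be a topological space and X ⊆ Y a subset (with the subspace topology). Suppose that for every compact subset K ⊆ Y there exists a continuous map φ_K : K × [0,1] → Y such that (i) φ_K(p, 0) = p for all p ∈ K, (ii) φ_K(p, 1) ∈ X for all p ∈ K, and (iii) φ_K(p, t) ∈ X for all p ∈ K ∩ X and all t ∈ [0,1]. Then the inclusion map X → Y is a weak homotopy equivalence: it induces a bijection between the set of path components of X and the set of path components of Y, and for every base point x ∈ X and every n ≥ 1 it induces a group isomorphism from the n-th homotopy group π_n(X, x) to π_n(Y, x). -/

import Mathlib

open scoped Topology.Homotopy unitInterval Topology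

noncomputable section Stmt6Aux

namespace Stmt6Aux

/-- Clipping a real number into the unit interval. -/
def clip (r : ℝ) : I := Set.projIcc 0 1 zero_le_one r

lemma continuous_clip : Continuous clip := by unfold clip; exact continuous_projIcc

lemma clip_coe (r : ℝ) : (clip r : ℝ) = max 0 (min 1 r) := rfl

lemma clip_nonpos {r : ℝ} (h : r ≤ 0) : clip r = 0 := by
  apply Subtype.ext
  rw [clip_coe, min_eq_right (h.trans zero_le_one), max_eq_left h]
  rfl

lemma clip_ge_one {r : ℝ} (h : 1 ≤ r) : clip r = 1 := by
  apply Subtype.ext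
  rw [clip_coe, min_eq_left h, max_eq_right zero_le_one]
  rfl

lemma clip_unit (u : I) : clip (u : ℝ) = u := by
  apply Subtype.ext
  rw [clip_coe, min_eq_right u.2.2, max_eq_right u.2.1]

/-- The midpoint of the unit interval. -/
def half : I := ⟨1 / 2, by constructor <;> norm_num⟩

lemma dist_half_le (u : I) : dist u half ≤ 1 / 2 := by
  rw [Subtype.dist_eq, Real.dist_eq]
  have h1 := u.2.1; have h2 := u.2.2
  rw [abs_le]
  constructor <;> simp only [half] <;> linarith

lemma dist_half_of_bd {u : I} (h : u = 0 ∨ u = 1) : dist u half = 1 / 2 := by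
  rcases h with h | h <;> subst h <;>
    rw [Subtype.dist_eq, Real.dist_eq] <;> simp [half] <;> norm_num

lemma clip_coord_of_far {u : I} (h : 1 / 4 < dist u half) :
    clip (2 * (u : ℝ) - 1 / 2) = 0 ∨ clip (2 * (u : ℝ) - 1 / 2) = 1 := by
  rw [Subtype.dist_eq, Real.dist_eq] at h
  rcases lt_abs.mp h with h | h
  · right; apply clip_ge_one; simp only [half] at h; linarith
  · left; apply clip_nonpos; simp only [half] at h; linarith

lemma clip_coord_zero {u : I} (h : u = 0) : clip (2 * (u : ℝ) - 1 / 2) = 0 := by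
  subst h; apply clip_nonpos; norm_num

lemma clip_coord_one {u : I} (h : u = 1) : clip (2 * (u : ℝ) - 1 / 2) = 1 := by
  subst h; apply clip_ge_one; norm_num

variable {N : Type*} [Fintype N]

/-- The center of the cube. -/
def ctr : I^N := fun _ => half

lemma dist_ctr_le (y : I^N) : dist y (ctr : I^N) ≤ 1 / 2 :=
  (dist_pi_le_iff (by norm_num)).2 fun i => dist_half_le (y i)

lemma dist_ctr_of_boundary {y : I^N} (h : y ∈ Cube.boundary N) :
    dist y (ctr : I^N) = 1 / 2 := by
  obtain ⟨i, hi⟩ := h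
  refine le_antisymm (dist_ctr_le y) ?_
  calc (1 / 2 : ℝ) = dist (y i) half := (dist_half_of_bd hi).symm
    _ ≤ dist y (ctr : I^N) := dist_le_pi_dist y ctr i

lemma exists_far {y : I^N} (h : ¬ dist y (ctr : I^N) ≤ 1 / 4) :
    ∃ i, 1 / 4 < dist (y i) half := by
  by_contra hc
  push_neg at hc
  exact h ((dist_pi_le_iff (by norm_num)).2 fun i => hc i)

/-- The retraction of the cube blowing up the middle cube and pushing a collar onto the
boundary. -/
def cmap (y : I^N) : I^N := fun i => clip (2 * (y i : ℝ) - 1 / 2)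

lemma continuous_cmap : Continuous (cmap (N := N)) :=
  continuous_pi fun i => continuous_clip.comp (by fun_prop)

lemma cmap_boundary_of_far {y : I^N} (h : ¬ dist y (ctr : I^N) ≤ 1 / 4) :
    cmap y ∈ Cube.boundary N := by
  obtain ⟨i, hi⟩ := exists_far h
  exact ⟨i, clip_coord_of_far hi⟩

lemma cmap_mem_boundary {y : I^N} (h : y ∈ Cube.boundary N) : cmap y ∈ Cube.boundary N := by
  obtain ⟨i, hi | hi⟩ := h
  · exact ⟨i, Or.inl (clip_coord_zero hi)⟩
  · exact ⟨i, Or.inr (clip_coord_one hi)⟩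

/-- Straight-line deformation from the identity to `cmap`. -/
def line (t : I) (y : I^N) : I^N :=
  fun i => clip ((1 - (t : ℝ)) * (y i : ℝ) + (t : ℝ) * (cmap y i : ℝ))

lemma continuous_line : Continuous (fun q : I × (I^N) => line q.1 q.2) := by
  refine continuous_pi fun i => continuous_clip.comp ?_
  have : Continuous fun q : I × (I^N) => (cmap q.2 i : ℝ) :=
    continuous_subtype_val.comp ((continuous_apply i).comp (continuous_cmap.comp continuous_snd))
  fun_prop

lemma line_zero (y : I^N) : line 0 y = y := by
  funext i
  have : ((1 : ℝ) - ((0 : I) : ℝ)) * (y i : ℝ) + ((0 : I) : ℝ) * (cmap y i : ℝ) = (y i : ℝ) := by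
    norm_num
  rw [line, this, clip_unit]

lemma line_one (y : I^N) : line 1 y = cmap y := by
  funext i
  have : ((1 : ℝ) - ((1 : I) : ℝ)) * (y i : ℝ) + ((1 : I) : ℝ) * (cmap y i : ℝ)
      = (cmap y i : ℝ) := by norm_num
  rw [line, this, clip_unit]

lemma line_boundary {y : I^N} (h : y ∈ Cube.boundary N) (t : I) :
    line t y ∈ Cube.boundary N := by
  obtain ⟨i, hi | hi⟩ := h
  · refine ⟨i, Or.inl ?_⟩
    have h2 : cmap y i = 0 := clip_coord_zero hi
    rw [line, hi, h2]
    apply clip_nonpos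
    norm_num
  · refine ⟨i, Or.inr ?_⟩
    have h2 : cmap y i = 1 := clip_coord_one hi
    rw [line, hi, h2]
    apply clip_ge_one
    norm_num

variable {Z : Type*} [TopologicalSpace Z] {z : Z}

/-- Composition of a generalized loop with the cube retraction `cmap`. -/
def compC (p : Ω^ N Z z) : Ω^ N Z z :=
  ⟨p.1.comp ⟨cmap, continuous_cmap⟩, fun y hy => p.2 _ (cmap_mem_boundary hy)⟩

lemma homotopic_compC (p : Ω^ N Z z) : GenLoop.Homotopic p (compC p) := by
  refine ⟨{ toFun := fun q => p.1 (line q.1 q.2)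
            continuous_toFun := p.1.continuous.comp continuous_line
            map_zero_left := fun y => by
              show p.1 (line 0 y) = _
              rw [line_zero]
            map_one_left := fun y => by
              show p.1 (line 1 y) = _
              rw [line_one]; rfl
            prop' := fun t y hy => ?_ }⟩
  show p.1 (line t y) = p.1 y
  rw [p.2 _ (line_boundary hy t), p.2 y hy]

end Stmt6Aux


/-- The map on path components (zeroth homotopy) induced by the inclusion `X ⊆ Y`. -/
def zerothHomotopyInduced {Y : Type*} [TopologicalSpace Y] (X : Set Y) :
    ZerothHomotopy X → ZerothHomotopy Y :=
  Quotient.map (fun x => (x : Y))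
    (fun _ _ h => ⟨h.somePath.map continuous_subtype_val⟩)

/-- Pushforward of a generalized loop along a continuous map. -/
def genLoopInduced {Z W : Type*} [TopologicalSpace Z] [TopologicalSpace W] {N : Type*}
    (φ : C(Z, W)) {z : Z} (p : GenLoop N Z z) : GenLoop N W (φ z) :=
  ⟨φ.comp p.1, fun y hy => congrArg φ (p.2 y hy)⟩

/-- The map on `n`-th homotopy groups induced by the inclusion `X ⊆ Y` at a base point
`x ∈ X`, given by post-composition of (generalized) loops with the inclusion. -/
def homotopyGroupInduced {Y : Type*} [TopologicalSpace Y] (X : Set Y) (n : ℕ) (x : X) :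
    HomotopyGroup (Fin n) X x → HomotopyGroup (Fin n) Y (x : Y) :=
  Quotient.map (genLoopInduced ⟨Subtype.val, continuous_subtype_val⟩)
    (fun _ _ h =>
      h.map fun H => H.compContinuousMap ⟨Subtype.val, continuous_subtype_val⟩)

namespace Stmt6Aux

lemma genLoopInduced_transAt {Z W : Type*} [TopologicalSpace Z] [TopologicalSpace W]
    {M : Type*} [DecidableEq M] (φ : C(Z, W)) {z : Z} (i : M) (f g : Ω^ M Z z) :
    genLoopInduced φ (GenLoop.transAt i f g) =
      GenLoop.transAt i (genLoopInduced φ f) (genLoopInduced φ g) := by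
  apply GenLoop.ext
  intro y
  show φ ((GenLoop.transAt i f g) y) = _
  simp only [GenLoop.transAt, GenLoop.coe_copy]
  rw [apply_ite φ]
  rfl

variable {N : Type*} [Fintype N] [Nonempty N]
variable {Y : Type*} [TopologicalSpace Y] {X : Set Y}

lemma surj_key
    (hyp : ∀ K : Set Y, IsCompact K → ∃ φ : C(K × I, Y),
      (∀ p : K, φ (p, 0) = (p : Y)) ∧ (∀ p : K, φ (p, 1) ∈ X) ∧
      (∀ p : K, (p : Y) ∈ X → ∀ t : I, φ (p, t) ∈ X))
    (x : X) (f : Ω^ N Y (x : Y)) :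
    ∃ g : Ω^ N X x,
      GenLoop.Homotopic (genLoopInduced ⟨Subtype.val, continuous_subtype_val⟩ g) f := by
  obtain ⟨φ, h0, h1, hX⟩ := hyp (Set.range f.1) (isCompact_range f.1.continuous)
  let fK : C(I^N, Set.range ⇑f.1) :=
    ⟨fun y => ⟨f.1 y, Set.mem_range_self y⟩, f.1.continuous.subtype_mk _⟩
  let sf : (I^N) → I := fun y => clip (2 - 4 * dist y (ctr : I^N))
  have hsf : Continuous sf := continuous_clip.comp (by fun_prop)
  let raw : (I^N) → Y := fun y => φ (fK (cmap y), sf y)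
  have hraw : Continuous raw :=
    φ.continuous.comp ((fK.continuous.comp continuous_cmap).prodMk hsf)
  have mem : ∀ y, raw y ∈ X := by
    intro y
    by_cases h : dist y (ctr : I^N) ≤ 1 / 4
    · have hs1 : sf y = 1 := clip_ge_one (by linarith)
      show φ (fK (cmap y), sf y) ∈ X
      rw [hs1]; exact h1 _
    · have hb := cmap_boundary_of_far h
      have hx : (fK (cmap y) : Y) ∈ X := by
        show f.1 (cmap y) ∈ X
        rw [f.2 _ hb]; exact x.2
      exact hX _ hx _
  have sf_bd : ∀ y ∈ Cube.boundary N, sf y = 0 := by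
    intro y hy
    show clip (2 - 4 * dist y (ctr : I^N)) = 0
    rw [dist_ctr_of_boundary hy]
    apply clip_nonpos; norm_num
  have bdry : ∀ y ∈ Cube.boundary N, raw y = (x : Y) := by
    intro y hy
    show φ (fK (cmap y), sf y) = _
    rw [sf_bd y hy, h0]
    show f.1 (cmap y) = _
    exact f.2 _ (cmap_mem_boundary hy)
  refine ⟨⟨⟨fun y => ⟨raw y, mem y⟩, hraw.subtype_mk _⟩,
    fun y hy => Subtype.ext (bdry y hy)⟩, ?_⟩
  have hG : GenLoop.Homotopic (compC f)
      (genLoopInduced ⟨Subtype.val, continuous_subtype_val⟩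
        (⟨⟨fun y => ⟨raw y, mem y⟩, hraw.subtype_mk _⟩,
          fun y hy => Subtype.ext (bdry y hy)⟩ : Ω^ N X x)) := by
    refine ⟨{ toFun := fun q =>
                φ (fK (cmap q.2), clip ((q.1 : ℝ) * (2 - 4 * dist q.2 (ctr : I^N))))
              continuous_toFun := ?_
              map_zero_left := fun y => ?_
              map_one_left := fun y => ?_
              prop' := fun t y hy => ?_ }⟩
    · refine φ.continuous.comp (Continuous.prodMk ?_ (continuous_clip.comp ?_))
      · exact fK.continuous.comp (continuous_cmap.comp continuous_snd)
      · fun_prop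
    · show φ (fK (cmap y), clip (((0 : I) : ℝ) * (2 - 4 * dist y (ctr : I^N)))) = _
      rw [show (((0 : I) : ℝ) * (2 - 4 * dist y (ctr : I^N))) = 0 by norm_num,
        clip_nonpos (le_refl (0 : ℝ)), h0]
      rfl
    · show φ (fK (cmap y), clip (((1 : I) : ℝ) * (2 - 4 * dist y (ctr : I^N)))) = _
      rw [show (((1 : I) : ℝ) * (2 - 4 * dist y (ctr : I^N)))
            = 2 - 4 * dist y (ctr : I^N) by norm_num]
      rfl
    · show φ (fK (cmap y), clip ((t : ℝ) * (2 - 4 * dist y (ctr : I^N)))) = _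
      rw [dist_ctr_of_boundary hy,
        show ((t : ℝ) * (2 - 4 * (1 / 2 : ℝ))) = 0 by ring,
        clip_nonpos (le_refl (0 : ℝ)), h0]
      rfl
  exact hG.symm.trans (homotopic_compC f).symm

lemma inj_key
    (hyp : ∀ K : Set Y, IsCompact K → ∃ φ : C(K × I, Y),
      (∀ p : K, φ (p, 0) = (p : Y)) ∧ (∀ p : K, φ (p, 1) ∈ X) ∧
      (∀ p : K, (p : Y) ∈ X → ∀ t : I, φ (p, t) ∈ X))
    (x : X) (g₀ g₁ : Ω^ N X x)
    (h : GenLoop.Homotopic (genLoopInduced ⟨Subtype.val, continuous_subtype_val⟩ g₀)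
      (genLoopInduced ⟨Subtype.val, continuous_subtype_val⟩ g₁)) :
    GenLoop.Homotopic g₀ g₁ := by
  obtain ⟨H⟩ := h
  obtain ⟨φ, h0, h1, hX⟩ := hyp (Set.range ⇑H) (isCompact_range H.continuous)
  let HK : C(I × (I^N), Set.range ⇑H) :=
    ⟨fun z => ⟨H z, Set.mem_range_self z⟩, H.continuous.subtype_mk _⟩
  let cc : I × (I^N) → I × (I^N) := fun z => (clip (2 * (z.1 : ℝ) - 1 / 2), cmap z.2)
  have hcc : Continuous cc :=
    (continuous_clip.comp (by fun_prop)).prodMk (continuous_cmap.comp continuous_snd)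
  let d : I × (I^N) → ℝ := fun z => max (dist z.1 half) (dist z.2 (ctr : I^N))
  have hd : Continuous d :=
    (Continuous.dist continuous_fst continuous_const).max
      (Continuous.dist continuous_snd continuous_const)
  let sf : I × (I^N) → I := fun z => clip (2 - 4 * d z)
  have hsf : Continuous sf := continuous_clip.comp (by fun_prop)
  have HmemX : ∀ z : I × (I^N), (z.1 = 0 ∨ z.1 = 1 ∨ z.2 ∈ Cube.boundary N) → H z ∈ X := by
    rintro ⟨t, y⟩ (h | h | h)
    · subst h; rw [H.apply_zero]; exact (g₀ y).2
    · subst h; rw [H.apply_one]; exact (g₁ y).2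
    · rw [H.eq_fst t h]; exact (g₀ y).2
  let raw : I × (I^N) → Y := fun z => φ (HK (cc z), sf z)
  have hraw : Continuous raw := φ.continuous.comp ((HK.continuous.comp hcc).prodMk hsf)
  have mem : ∀ z, raw z ∈ X := by
    intro z
    by_cases h : d z ≤ 1 / 4
    · have hs1 : sf z = 1 := clip_ge_one (by linarith)
      show φ (HK (cc z), sf z) ∈ X
      rw [hs1]; exact h1 _
    · have h' : 1 / 4 < d z := not_le.mp h
      have hmem : (HK (cc z) : Y) ∈ X := by
        show H (cc z) ∈ X
        apply HmemX
        rcases lt_max_iff.mp h' with h'' | h''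
        · rcases clip_coord_of_far h'' with hc | hc
          · exact Or.inl hc
          · exact Or.inr (Or.inl hc)
        · exact Or.inr (Or.inr (cmap_boundary_of_far (not_le.mpr h'')))
      exact hX _ hmem _
  have hE : GenLoop.Homotopic (compC g₀) (compC g₁) := by
    refine ⟨{ toFun := fun z => ⟨raw z, mem z⟩
              continuous_toFun := hraw.subtype_mk _
              map_zero_left := fun y => ?_
              map_one_left := fun y => ?_
              prop' := fun t y hy => ?_ }⟩
    · apply Subtype.ext
      have hd0 : d (0, y) = 1 / 2 := by
        show max (dist (0 : I) half) (dist y (ctr : I^N)) = 1 / 2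
        rw [dist_half_of_bd (Or.inl rfl)]
        exact max_eq_left (dist_ctr_le y)
      have hs0 : sf (0, y) = 0 := by
        show clip (2 - 4 * d (0, y)) = 0
        rw [hd0]; apply clip_nonpos; norm_num
      show φ (HK (cc (0, y)), sf (0, y)) = _
      rw [hs0, h0]
      show H (cc (0, y)) = _
      have hcc0 : cc (0, y) = (0, cmap y) := by
        show (clip (2 * ((0 : I) : ℝ) - 1 / 2), cmap y) = _
        rw [show (2 * ((0 : I) : ℝ) - 1 / 2 : ℝ) = -(1 / 2) by norm_num]
        rw [clip_nonpos (by norm_num)]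
      rw [hcc0, H.apply_zero]
      rfl
    · apply Subtype.ext
      have hd0 : d (1, y) = 1 / 2 := by
        show max (dist (1 : I) half) (dist y (ctr : I^N)) = 1 / 2
        rw [dist_half_of_bd (Or.inr rfl)]
        exact max_eq_left (dist_ctr_le y)
      have hs0 : sf (1, y) = 0 := by
        show clip (2 - 4 * d (1, y)) = 0
        rw [hd0]; apply clip_nonpos; norm_num
      show φ (HK (cc (1, y)), sf (1, y)) = _
      rw [hs0, h0]
      show H (cc (1, y)) = _
      have hcc1 : cc (1, y) = (1, cmap y) := by
        show (clip (2 * ((1 : I) : ℝ) - 1 / 2), cmap y) = _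
        rw [show (2 * ((1 : I) : ℝ) - 1 / 2 : ℝ) = 3 / 2 by norm_num]
        rw [clip_ge_one (by norm_num)]
      rw [hcc1, H.apply_one]
      rfl
    · apply Subtype.ext
      have hd0 : d (t, y) = 1 / 2 := by
        show max (dist t half) (dist y (ctr : I^N)) = 1 / 2
        rw [dist_ctr_of_boundary hy]
        exact max_eq_right (dist_half_le t)
      have hs0 : sf (t, y) = 0 := by
        show clip (2 - 4 * d (t, y)) = 0
        rw [hd0]; apply clip_nonpos; norm_num
      show φ (HK (cc (t, y)), sf (t, y)) = _
      rw [hs0, h0]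
      show H (cc (t, y)) = _
      exact H.eq_fst _ (cmap_mem_boundary hy)
  exact (homotopic_compC g₀).trans (hE.trans (homotopic_compC g₁).symm)

end Stmt6Aux

open Stmt6Aux

/-- Suppose for every compact K ⊆ Y there is a homotopy φ_K : K × [0,1] → Y starting at the
inclusion, ending in X, and staying in X on K ∩ X. Then the inclusion X → Y is a weak
homotopy equivalence: it induces a bijection on path components and, for every base point
x ∈ X and every n ≥ 1, a group isomorphism π_n(X, x) → π_n(Y, x). -/
theorem stmt6 {Y : Type*} [TopologicalSpace Y] (X : Set Y)
    (hyp : ∀ K : Set Y, IsCompact K → ∃ φ : C(K × unitInterval, Y),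
      (∀ p : K, φ (p, 0) = (p : Y)) ∧ (∀ p : K, φ (p, 1) ∈ X) ∧
      (∀ p : K, (p : Y) ∈ X → ∀ t : unitInterval, φ (p, t) ∈ X)) :
    Function.Bijective (zerothHomotopyInduced X) ∧
    ∀ (x : X) (n : ℕ) (hn : 1 ≤ n),
      haveI : Nonempty (Fin n) := ⟨⟨0, hn⟩⟩
      Function.Bijective (homotopyGroupInduced X n x) ∧
      ∀ a b : HomotopyGroup (Fin n) X x,
        homotopyGroupInduced X n x (a * b) =
          homotopyGroupInduced X n x a * homotopyGroupInduced X n x b := by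
  constructor
  · constructor
    · -- injective on path components
      intro a b
      refine Quotient.inductionOn₂ a b fun x₁ x₂ h => ?_
      have hj : Joined (x₁ : Y) (x₂ : Y) := Quotient.exact h
      obtain ⟨p⟩ := hj
      obtain ⟨φ, h0, h1, hX⟩ := hyp (Set.range ⇑p) (isCompact_range p.continuous)
      let q₁ : Set.range ⇑p := ⟨(x₁ : Y), ⟨0, p.source⟩⟩
      let q₂ : Set.range ⇑p := ⟨(x₂ : Y), ⟨1, p.target⟩⟩
      refine Quotient.sound ⟨?_⟩
      let P₁ : Path (x₁ : X) (⟨φ (q₁, 1), h1 q₁⟩ : X) :=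
        { toFun := fun t => ⟨φ (q₁, t), hX q₁ x₁.2 t⟩
          continuous_toFun :=
            (φ.continuous.comp (continuous_const.prodMk continuous_id)).subtype_mk _
          source' := Subtype.ext (h0 q₁)
          target' := rfl }
      let P₃ : Path (x₂ : X) (⟨φ (q₂, 1), h1 q₂⟩ : X) :=
        { toFun := fun t => ⟨φ (q₂, t), hX q₂ x₂.2 t⟩
          continuous_toFun :=
            (φ.continuous.comp (continuous_const.prodMk continuous_id)).subtype_mk _
          source' := Subtype.ext (h0 q₂)
          target' := rfl }
      let P₂ : Path (⟨φ (q₁, 1), h1 q₁⟩ : X) (⟨φ (q₂, 1), h1 q₂⟩ : X) :=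
        { toFun := fun t => ⟨φ (⟨p t, Set.mem_range_self t⟩, 1), h1 _⟩
          continuous_toFun :=
            (φ.continuous.comp ((p.continuous.subtype_mk _).prodMk continuous_const)).subtype_mk _
          source' := by
            apply Subtype.ext
            show φ (⟨p 0, _⟩, 1) = φ (q₁, 1)
            congr 1
            exact Prod.ext (Subtype.ext p.source) rfl
          target' := by
            apply Subtype.ext
            show φ (⟨p 1, _⟩, 1) = φ (q₂, 1)
            congr 1
            exact Prod.ext (Subtype.ext p.target) rfl }
      exact (P₁.trans P₂).trans P₃.symm
    · -- surjective on path components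
      intro c
      refine Quotient.inductionOn c fun y => ?_
      obtain ⟨φ, h0, h1, hX⟩ := hyp {y} isCompact_singleton
      let q : ({y} : Set Y) := ⟨y, rfl⟩
      refine ⟨Quotient.mk _ (⟨φ (q, 1), h1 q⟩ : X), ?_⟩
      show Quotient.map _ _ _ = _
      refine Quotient.sound ?_
      exact ⟨(Path.mk ⟨fun t => φ (q, t),
        φ.continuous.comp (continuous_const.prodMk continuous_id)⟩ (h0 q) rfl).symm⟩
  · intro x n hn
    haveI : Nonempty (Fin n) := ⟨⟨0, hn⟩⟩
    refine ⟨⟨?_, ?_⟩, ?_⟩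
    · intro a b
      refine Quotient.inductionOn₂ a b fun g₀ g₁ h => ?_
      simp only [homotopyGroupInduced, Quotient.map_mk] at h
      exact Quotient.sound (inj_key hyp x g₀ g₁ (Quotient.exact h))
    · intro c
      refine Quotient.inductionOn c fun f => ?_
      obtain ⟨g, hg⟩ := surj_key hyp x f
      refine ⟨⟦g⟧, ?_⟩
      show Quotient.map _ _ ⟦g⟧ = ⟦f⟧
      exact Quotient.sound hg
    · intro a b
      refine Quotient.inductionOn₂ a b fun p q => ?_
      have key : homotopyGroupInduced X n x ⟦GenLoop.transAt ⟨0, hn⟩ q p⟧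
          = ⟦GenLoop.transAt ⟨0, hn⟩
              (genLoopInduced ⟨Subtype.val, continuous_subtype_val⟩ q)
              (genLoopInduced ⟨Subtype.val, continuous_subtype_val⟩ p)⟧ := by
        simp only [homotopyGroupInduced]
        exact congrArg (Quotient.mk _) (genLoopInduced_transAt _ _ q p)
      exact (congrArg (homotopyGroupInduced X n x)
          (HomotopyGroup.mul_spec (i := (⟨0, hn⟩ : Fin n)))).trans
        (key.trans (HomotopyGroup.mul_spec (i := (⟨0, hn⟩ : Fin n))).symm)
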